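/- Let Q' be a core of Q, let q be an atom of Q', and let O ⊆ vars(q). Then Q' extended with a fresh atom atom(O) over exactly the variables O (with a fresh relation symbol) is a core of Q extended with atom(O). -/
import Mathlib


structure Atom (σ : Type*) (ρ : σ → ℕ) (V : Type*) where
  rel : σ
  args : Fin (ρ rel) → V

variable {σ : Type*} {ρ : σ → ℕ} {V W : Type*}

def Atom.map (h : V → W) (a : Atom σ ρ V) : Atom σ ρ W :=
  ⟨a.rel, h ∘ a.args⟩

def Atom.vars (a : Atom σ ρ V) : Set V := Set.range a.args

def qvars (Q : Set (Atom σ ρ V)) : Set V := ⋃ a ∈ Q, a.vars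

def IsHom (h : V → W) (Q : Set (Atom σ ρ V)) (D : Set (Atom σ ρ W)) : Prop :=
  ∀ a ∈ Q, a.map h ∈ D

def IsCore (Q C : Set (Atom σ ρ V)) : Prop :=
  C ⊆ Q ∧ (∃ h : V → V, IsHom h Q C) ∧
    ∀ C' ⊆ C, (∃ h : V → V, IsHom h Q C') → C' = C

lemma iter_mem {f : V → V} {S : Set V} (hf : ∀ v ∈ S, f v ∈ S) :
    ∀ n, ∀ v ∈ S, f^[n] v ∈ S := by
  intro n
  induction n with
  | zero => intro v hv; simpa using hv
  | succ n ih =>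
      intro v hv
      rw [Function.iterate_succ_apply]
      exact ih _ (hf v hv)

lemma exists_idem_iterate {S : Set V} (hS : S.Finite) (f : V → V)
    (hf : ∀ v ∈ S, f v ∈ S) :
    ∃ k, 0 < k ∧ ∀ v ∈ S, f^[k] (f^[k] v) = f^[k] v := by
  have : Finite ↥S := hS.to_subtype
  set g : ℕ → (↥S → ↥S) := fun n x => ⟨f^[n] x, iter_mem hf n x x.2⟩ with hg
  obtain ⟨m', n', hne, heq⟩ := Finite.exists_ne_map_eq_of_infinite g
  obtain ⟨m, n, hmn, hmeq⟩ : ∃ m n, m < n ∧ ∀ v ∈ S, f^[m] v = f^[n] v := by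
    rcases lt_or_gt_of_ne hne with h | h
    · exact ⟨m', n', h, fun v hv => congrArg Subtype.val (congrFun heq ⟨v, hv⟩)⟩
    · exact ⟨n', m', h, fun v hv => (congrArg Subtype.val (congrFun heq ⟨v, hv⟩)).symm⟩
  set p := n - m with hp
  have hp1 : 0 < p := Nat.sub_pos_of_lt hmn
  have step : ∀ a, m ≤ a → ∀ v ∈ S, f^[a + p] v = f^[a] v := by
    intro a ha v hv
    have h1 : a + p = (a - m) + n := by omega
    have h2 : a = (a - m) + m := by omega
    rw [h1, Function.iterate_add_apply, ← hmeq v hv, ← Function.iterate_add_apply, ← h2]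
  have iter : ∀ j a, m ≤ a → ∀ v ∈ S, f^[a + j * p] v = f^[a] v := by
    intro j
    induction j with
    | zero => intro a ha v hv; simp
    | succ j ih =>
        intro a ha v hv
        have : a + (j + 1) * p = (a + j * p) + p := by ring
        rw [this, step _ (by omega) v hv, ih a ha v hv]
  refine ⟨(m + 1) * p, by positivity, fun v hv => ?_⟩
  have := iter (m + 1) ((m + 1) * p) (by nlinarith) v hv
  rw [← Function.iterate_add_apply, this]

lemma Atom.map_map (f g : V → V) (a : Atom σ ρ V) :
    (a.map f).map g = a.map (g ∘ f) := rfl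

/-- if `C` is a core of `Q`, `q` an atom of `C`, and `O ⊆ vars(q)`
(the set `O` enumerated by the tuple `t` of the fresh symbol `r₀`), then
`C ∧ atom(O)` is a core of `Q ∧ atom(O)`. -/
theorem stmt4 {σ : Type*} {ρ : σ → ℕ} {V : Type*} (Q C : Set (Atom σ ρ V))
    (hfin : Q.Finite) (hcore : IsCore Q C) (q : Atom σ ρ V) (hq : q ∈ C)
    (r₀ : σ) (hfresh : ∀ a ∈ Q, a.rel ≠ r₀) (t : Fin (ρ r₀) → V)
    (ht : Set.range t ⊆ Set.range q.args) :
    IsCore (insert ⟨r₀, t⟩ Q) (insert ⟨r₀, t⟩ C) := by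
  obtain ⟨hsub, ⟨h, hhom⟩, hmin⟩ := hcore
  set a₀ : Atom σ ρ V := ⟨r₀, t⟩ with ha₀
  set S : Set V := qvars Q with hS
  have hSfin : S.Finite :=
    Set.Finite.biUnion hfin (fun a _ => Set.finite_range a.args)
  have hmemS : ∀ a ∈ Q, ∀ i, a.args i ∈ S := by
    intro a ha i
    exact Set.mem_biUnion ha ⟨i, rfl⟩
  have hmap : ∀ v ∈ S, h v ∈ S := by
    intro v hv
    obtain ⟨a, ha, i, hi⟩ : ∃ a ∈ Q, ∃ i, a.args i = v := by
      simpa [hS, qvars, Atom.vars] using hv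
    have : (a.map h).args i = h v := by simp [Atom.map, hi]
    exact this ▸ hmemS _ (hsub (hhom a ha)) i
  obtain ⟨k, hk, hidem⟩ := exists_idem_iterate hSfin h hmap
  -- every positive iterate of h is a hom from Q to C
  have hithom : ∀ m, IsHom (h^[m + 1]) Q C := by
    intro m
    induction m with
    | zero => simpa using hhom
    | succ m ih =>
        intro a ha
        have e : a.map (h^[m + 1 + 1]) = (a.map (h^[m + 1])).map h := by
          rw [Atom.map_map, ← Function.iterate_succ']
        rw [e]
        exact hhom _ (hsub (ih a ha))
  have hghom : IsHom (h^[k]) Q C := by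
    have := hithom (k - 1)
    rwa [Nat.sub_add_cancel hk] at this
  -- h^[k] is idempotent on atoms of Q
  have idem_map : ∀ a ∈ Q, (a.map (h^[k])).map (h^[k]) = a.map (h^[k]) := by
    intro a ha
    rw [Atom.map_map]
    exact congrArg (Atom.mk a.rel) (funext fun i => hidem _ (hmemS a ha i))
  -- the image of C under h^[k] equals C, by minimality
  set C₀ : Set (Atom σ ρ V) := (fun a => a.map (h^[k])) '' C with hC₀
  have hC₀sub : C₀ ⊆ C := by
    rintro _ ⟨b, hb, rfl⟩
    exact hghom b (hsub hb)
  have hC₀eq : C₀ = C := by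
    refine hmin C₀ hC₀sub ⟨h^[k], fun a ha => ?_⟩
    exact ⟨a.map (h^[k]), hghom a ha, idem_map a ha⟩
  -- h^[k] fixes the variables of q
  have hfixq : ∀ i, h^[k] (q.args i) = q.args i := by
    rw [← hC₀eq] at hq
    obtain ⟨b, hbC, rfl⟩ := hq
    intro i
    exact hidem _ (hmemS b (hsub hbC) i)
  have hfixt : ∀ j, h^[k] (t j) = t j := by
    intro j
    obtain ⟨i, hi⟩ := ht ⟨j, rfl⟩
    rw [← hi, hfixq i]
  have ha₀map : a₀.map (h^[k]) = a₀ :=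
    congrArg (Atom.mk r₀) (funext hfixt)
  refine ⟨Set.insert_subset_insert hsub, ⟨h^[k], ?_⟩, ?_⟩
  · rintro a (rfl | ha)
    · rw [ha₀map]; exact Set.mem_insert _ _
    · exact Set.mem_insert_of_mem _ (hghom a ha)
  · rintro C' hC' ⟨f, hf⟩
    have hfa₀ : a₀.map f ∈ C' := hf a₀ (Set.mem_insert _ _)
    have ha₀C' : a₀ ∈ C' := by
      rcases hC' hfa₀ with heq | hmem
      · rwa [← heq]
      · exact absurd rfl (hfresh _ (hsub hmem))
    set D : Set (Atom σ ρ V) := {a ∈ C' | a.rel ≠ r₀} with hD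
    have hDsub : D ⊆ C := by
      rintro a ⟨haC', har⟩
      rcases hC' haC' with rfl | hmem
      · exact absurd rfl har
      · exact hmem
    have hDeq : D = C := by
      refine hmin D hDsub ⟨f, fun a ha => ?_⟩
      exact ⟨hf a (Set.mem_insert_of_mem _ ha), hfresh a ha⟩
    refine Set.Subset.antisymm hC' ?_
    rintro a (rfl | haC)
    · exact ha₀C'
    · rw [← hDeq] at haC
      exact haC.1
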